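/- Let p ≥ 1, let x_i (i ∈ ℤ) be a p-periodic sequence in a commutative ring, and set X_j^{(n)} = P_n(x_j,…,x_{j+n−1}) and d = X_0^{(p)} − X_1^{(p−2)} (with the convention X_j^{(−1)} = 0, X_j^{(0)} = 1). Suppose that for all admissible indices the multiplication identities X_j^{(m)}·X_0^{(n)} = X_0^{(m+j+kp)}·X_j^{(n−j−kp)} + X_0^{(j+kp−1)}·X_{n+1}^{(m+j+kp−n−1)} hold. Then for every l ≥ 1 and 0 ≤ k ≤ p−1, X_0^{(k)}·F_l(d) = X_0^{(lp+k)} − X_{k+1}^{(lp−k−2)}. -/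

import Mathlib

/-- Generalized Chebyshev polynomial on the window `x j, x (j+1), …, x (j+n-1)`
of a bi-infinite sequence: `Pz x j n = P_n(x_j, …, x_{j+n−1})`. -/
def Pz {R : Type*} [CommRing R] (x : ℤ → R) (j : ℤ) : ℕ → R
  | 0 => 1
  | 1 => x j
  | (n + 2) => x (j + (n + 1)) * Pz x j (n + 1) - Pz x j n

/-- `Xn x j n = X_j^{(n)}`, with the convention `X_j^{(n)} = 0` for `n < 0`. -/
def Xn {R : Type*} [CommRing R] (x : ℤ → R) (j n : ℤ) : R :=
  if n < 0 then 0 else Pz x j n.toNat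

/-- Normalized Chebyshev polynomials of the first kind. -/
noncomputable def F : ℕ → Polynomial ℤ
  | 0 => 2
  | 1 => Polynomial.X
  | (n + 2) => Polynomial.X * F (n + 1) - F n

namespace GDP
variable {R : Type*} [CommRing R] (x : ℤ → R)

lemma pz_two (j : ℤ) (n : ℕ) :
    Pz x j (n+2) = x (j + n + 1) * Pz x j (n+1) - Pz x j n := by
  simp [Pz, add_assoc]

lemma pz_left : ∀ (n : ℕ) (j : ℤ),
    Pz x j (n+2) = x j * Pz x (j+1) (n+1) - Pz x (j+2) n := by
  have H : ∀ n : ℕ, (∀ j : ℤ, Pz x j (n+2) = x j * Pz x (j+1) (n+1) - Pz x (j+2) n)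
      ∧ (∀ j : ℤ, Pz x j (n+3) = x j * Pz x (j+1) (n+2) - Pz x (j+2) (n+1)) := by
    intro n
    induction n with
    | zero =>
      constructor
      · intro j; show x (j + (0+1)) * _ - _ = _
        simp [Pz]; ring
      · intro j
        rw [show (3 : ℕ) = 1 + 2 from rfl, pz_two, pz_two]
        simp [Pz]; ring_nf
    | succ m ih =>
      refine ⟨ih.2, ?_⟩
      intro j
      have e1 : m + 1 + 3 = (m + 2) + 2 := by omega
      have e2 : m + 1 + 2 = (m + 1) + 2 := by omega
      have e4 : m + 1 + 1 = m + 2 := by omega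
      have e5 : m + 2 + 1 = m + 3 := by omega
      rw [e1, pz_two, e5, ih.2 j, ih.1 j, e2, pz_two x (j+1) (m+1), e4,
        pz_two x (j+2) m]
      push_cast; ring_nf
  exact fun n j => (H n).1 j

/-- Two-sided extension of the generalized Chebyshev values. -/
def Y (x : ℤ → R) (j n : ℤ) : R :=
  if -1 ≤ n then Xn x j n else -(Xn x (j + n + 1) (-n - 2))

lemma Y_eq_Xn {n : ℤ} (j : ℤ) (h : -1 ≤ n) : Y x j n = Xn x j n := if_pos h

lemma Xn_coe (j : ℤ) (m : ℕ) : Xn x j (m : ℤ) = Pz x j m := by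
  simp [Xn]

lemma Y_coe (j : ℤ) (m : ℕ) : Y x j (m : ℤ) = Pz x j m := by
  rw [Y_eq_Xn x j (by omega), Xn_coe]

lemma Y_neg_one (j : ℤ) : Y x j (-1) = 0 := by simp [Y, Xn]

lemma Y_zero (j : ℤ) : Y x j 0 = 1 := by simpa [Pz] using Y_coe x j 0

lemma Y_one (j : ℤ) : Y x j 1 = x j := by simpa [Pz] using Y_coe x j 1

lemma Y_neg (j : ℤ) (m : ℕ) : Y x j (-(m:ℤ) - 2) = -(Pz x (j - m - 1) m) := by
  have h : ¬ (-1 : ℤ) ≤ -(m:ℤ) - 2 := by omega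
  rw [Y, if_neg h]
  have e : j + (-(m:ℤ) - 2) + 1 = j - m - 1 := by ring
  have e2 : -(-(m:ℤ) - 2) - 2 = (m : ℤ) := by ring
  rw [e, e2, Xn_coe]

/-- Right three-term recurrence for `Y`, valid for all integers. -/
lemma Y_rec (j n : ℤ) : Y x j (n + 2) = x (j + n + 1) * Y x j (n + 1) - Y x j n := by
  rcases le_or_gt 0 n with h | h
  · obtain ⟨m, rfl⟩ := Int.eq_ofNat_of_zero_le h
    have e2 : (m : ℤ) + 2 = ((m + 2 : ℕ) : ℤ) := by push_cast; ring
    have e1 : (m : ℤ) + 1 = ((m + 1 : ℕ) : ℤ) := by push_cast; ring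
    rw [e2, e1, Y_coe, Y_coe, Y_coe, pz_two]
  · by_cases h1 : n = -1
    · subst h1
      norm_num [Y_one, Y_zero, Y_neg_one]
    · by_cases h2 : n = -2
      · subst h2
        have a : (-2 : ℤ) = -((0:ℕ):ℤ) - 2 := by norm_num
        norm_num [Y_zero, Y_neg_one]
        rw [a, Y_neg]
        simp [Pz]
      · by_cases h3 : n = -3
        · subst h3
          have a : (-3 : ℤ) = -((1:ℕ):ℤ) - 2 := by norm_num
          have b : (-3 : ℤ) + 2 = -1 := by norm_num
          have c : (-3 : ℤ) + 1 = -((0:ℕ):ℤ) - 2 := by norm_num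
          rw [b, c, a, Y_neg, Y_neg, Y_neg_one]
          simp [Pz]
          ring_nf
        · obtain ⟨m, rfl⟩ : ∃ m : ℕ, n = -(m:ℤ) - 4 := ⟨(-n-4).toNat, by omega⟩
          have a1 : -(m:ℤ) - 4 + 2 = -(m:ℤ) - 2 := by ring
          have a2 : -(m:ℤ) - 4 + 1 = -((m+1 : ℕ):ℤ) - 2 := by push_cast; ring
          have a3 : -(m:ℤ) - 4 = -((m+2 : ℕ):ℤ) - 2 := by push_cast; ring
          rw [a1, Y_neg, a2, Y_neg, a3, Y_neg, pz_left x m (j - ((m+2:ℕ):ℤ) - 1)]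
          push_cast; ring_nf

/-- Left three-term recurrence for `Y`, valid for all integers. -/
lemma Y_left (j n : ℤ) : Y x j (n + 2) = x j * Y x (j+1) (n + 1) - Y x (j+2) n := by
  rcases le_or_gt 0 n with h | h
  · obtain ⟨m, rfl⟩ := Int.eq_ofNat_of_zero_le h
    have e2 : (m : ℤ) + 2 = ((m + 2 : ℕ) : ℤ) := by push_cast; ring
    have e1 : (m : ℤ) + 1 = ((m + 1 : ℕ) : ℤ) := by push_cast; ring
    rw [e2, e1, Y_coe, Y_coe, Y_coe, pz_left]
  · by_cases h1 : n = -1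
    · subst h1
      norm_num [Y_one, Y_zero, Y_neg_one]
    · by_cases h2 : n = -2
      · subst h2
        have a : (-2 : ℤ) = -((0:ℕ):ℤ) - 2 := by norm_num
        norm_num [Y_zero, Y_neg_one]
        rw [a, Y_neg]
        simp [Pz]
      · by_cases h3 : n = -3
        · subst h3
          have a : (-3 : ℤ) = -((1:ℕ):ℤ) - 2 := by norm_num
          have b : (-3 : ℤ) + 2 = -1 := by norm_num
          have c : (-3 : ℤ) + 1 = -((0:ℕ):ℤ) - 2 := by norm_num
          rw [b, c, a, Y_neg, Y_neg, Y_neg_one]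
          simp [Pz]
          ring_nf
        · obtain ⟨m, rfl⟩ : ∃ m : ℕ, n = -(m:ℤ) - 4 := ⟨(-n-4).toNat, by omega⟩
          have a1 : -(m:ℤ) - 4 + 2 = -(m:ℤ) - 2 := by ring
          have a2 : -(m:ℤ) - 4 + 1 = -((m+1 : ℕ):ℤ) - 2 := by push_cast; ring
          have a3 : -(m:ℤ) - 4 = -((m+2 : ℕ):ℤ) - 2 := by push_cast; ring
          have b2 : j + 1 - ((m+1:ℕ):ℤ) - 1 = j - (m:ℤ) - 1 := by push_cast; ring
          have b3 : j + 2 - ((m+2:ℕ):ℤ) - 1 = j - (m:ℤ) - 1 := by push_cast; ring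
          rw [a1, Y_neg, a2, Y_neg, a3, Y_neg, b2, b3, pz_two x (j - (m:ℤ) - 1) m]
          push_cast; ring_nf

section periodic
variable (p : ℕ) (hper : ∀ i : ℤ, x (i + p) = x i)
include hper

lemma pz_per : ∀ (m : ℕ) (j : ℤ), Pz x (j + p) m = Pz x j m := by
  have H : ∀ m : ℕ, (∀ j : ℤ, Pz x (j + p) m = Pz x j m)
      ∧ (∀ j : ℤ, Pz x (j + p) (m+1) = Pz x j (m+1)) := by
    intro m
    induction m with
    | zero =>
      refine ⟨fun j => rfl, fun j => ?_⟩
      show x (j + p) = x j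
      exact hper j
    | succ m ih =>
      refine ⟨ih.2, fun j => ?_⟩
      rw [show m + 1 + 1 = m + 2 from rfl, pz_two, pz_two, ih.1 j, ih.2 j]
      have e : j + (p:ℤ) + m + 1 = (j + m + 1) + p := by ring
      rw [e, hper]
  exact fun m => (H m).1

lemma Xn_per (n j : ℤ) : Xn x (j + p) n = Xn x j n := by
  by_cases h : n < 0
  · simp [Xn, h]
  · simp [Xn, h, pz_per x p hper]

lemma Y_per (n j : ℤ) : Y x (j + p) n = Y x j n := by
  by_cases h : (-1 : ℤ) ≤ n
  · rw [Y_eq_Xn x _ h, Y_eq_Xn x _ h, Xn_per x p hper]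
  · rw [Y, if_neg h, Y, if_neg h]
    have e : j + (p:ℤ) + n + 1 = (j + n + 1) + p := by ring
    rw [e, Xn_per x p hper]

lemma Y_per' (n j : ℤ) : Y x (j - p) n = Y x j n := by
  have := Y_per x p hper n (j - p)
  rw [show j - (p:ℤ) + p = j by ring] at this
  exact this.symm

end periodic

/-- Splitting (continuant/Euler) identity. -/
lemma C_id : ∀ (m : ℕ) (j n : ℤ), Y x j ((m:ℤ) + n)
    = Y x j (m:ℤ) * Y x (j + m) n - Y x j ((m:ℤ) - 1) * Y x (j + m + 1) (n - 1) := by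
  have H : ∀ m : ℕ, (∀ j n : ℤ, Y x j ((m:ℤ) + n)
      = Y x j (m:ℤ) * Y x (j + m) n - Y x j ((m:ℤ) - 1) * Y x (j + m + 1) (n - 1))
      ∧ (∀ j n : ℤ, Y x j (((m+1:ℕ):ℤ) + n)
      = Y x j ((m+1:ℕ):ℤ) * Y x (j + (m+1:ℕ)) n
        - Y x j (((m+1:ℕ):ℤ) - 1) * Y x (j + (m+1:ℕ) + 1) (n - 1)) := by
    intro m
    induction m with
    | zero =>
      constructor
      · intro j n
        norm_num [Y_zero, Y_neg_one]
      · intro j n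
        have h := Y_left x j (n - 1)
        rw [show n - 1 + 2 = ((1:ℕ):ℤ) + n by push_cast; ring,
          show n - 1 + 1 = n by ring] at h
        rw [h]
        norm_num [Y_one, Y_zero]
        ring_nf
    | succ m ih =>
      refine ⟨ih.2, ?_⟩
      intro j n
      have hL := Y_left x j ((m:ℤ) + n)
      have ih1 := ih.2 (j+1) n
      have ih0 := ih.1 (j+2) n
      have hA := Y_left x j ((m:ℤ))
      have hB := Y_left x j ((m:ℤ) - 1)
      push_cast at hL ih1 ih0 hA hB ⊢
      ring_nf at hL ih1 ih0 hA hB ⊢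
      linear_combination (norm := ring_nf) hL + x j * ih1 - ih0
        - Y x (2 + (m:ℤ) + j) n * hA + Y x (3 + (m:ℤ) + j) (-1 + n) * hB
  exact fun m => (H m).1

/-- Cross (Pluecker-type) identity. -/
lemma K_id : ∀ (a : ℕ) (j b : ℤ), Y x j (a:ℤ) * Y x (j+1) b
      - Y x j (b+1) * Y x (j+1) ((a:ℤ) - 1) = Y x (j + a + 1) (b - a) := by
  have H : ∀ a : ℕ, (∀ j b : ℤ, Y x j (a:ℤ) * Y x (j+1) b
      - Y x j (b+1) * Y x (j+1) ((a:ℤ) - 1) = Y x (j + a + 1) (b - a))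
      ∧ (∀ j b : ℤ, Y x j ((a+1:ℕ):ℤ) * Y x (j+1) b
      - Y x j (b+1) * Y x (j+1) (((a+1:ℕ):ℤ) - 1) = Y x (j + (a+1:ℕ) + 1) (b - (a+1:ℕ))) := by
    intro a
    induction a with
    | zero =>
      constructor
      · intro j b
        norm_num [Y_zero, Y_neg_one]
      · intro j b
        have h := Y_left x j (b - 1)
        rw [show b - 1 + 2 = b + 1 by ring, show b - 1 + 1 = b by ring] at h
        push_cast
        norm_num [Y_one, Y_zero]
        linear_combination (norm := ring_nf) -h
    | succ a ih =>
      refine ⟨ih.2, ?_⟩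
      intro j b
      have h1 := Y_rec x j (a:ℤ)
      have h2 := Y_rec x (j+1) ((a:ℤ) - 1)
      have ih1 := ih.2 j b
      have ih0 := ih.1 j b
      have hL := Y_left x (j + (a:ℤ) + 1) (b - (a:ℤ) - 2)
      push_cast at h1 h2 ih1 ih0 hL ⊢
      ring_nf at h1 h2 ih1 ih0 hL ⊢
      linear_combination (norm := ring_nf) Y x (j+1) b * h1 - Y x j (b+1) * h2
        + x (j + a + 1) * ih1 - ih0 - hL
  exact fun a => (H a).1

section trace
variable (p : ℕ) (hper : ∀ i : ℤ, x (i + p) = x i)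
include hper

lemma trace_step (j : ℤ) :
    Y x j (p:ℤ) - Y x (j+1) ((p:ℤ)-2) = Y x (j+1) (p:ℤ) - Y x (j+2) ((p:ℤ)-2) := by
  have hL := Y_left x j ((p:ℤ) - 2)
  have hR := Y_rec x (j+1) ((p:ℤ) - 2)
  rw [show (p:ℤ) - 2 + 2 = (p:ℤ) by ring, show (p:ℤ) - 2 + 1 = (p:ℤ) - 1 by ring]
    at hL hR
  rw [show j + 1 + ((p:ℤ) - 2) + 1 = j + p by ring, hper j] at hR
  linear_combination (norm := ring_nf) hL - hR

lemma trace_all (j : ℤ) :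
    Y x j (p:ℤ) - Y x (j+1) ((p:ℤ)-2) = Y x 0 (p:ℤ) - Y x 1 ((p:ℤ)-2) := by
  induction j using Int.induction_on with
  | zero => norm_num
  | succ i ih =>
    have h := trace_step x p hper i
    rw [show (i:ℤ) + 1 + 1 = (i:ℤ) + 2 by ring]
    exact h.symm.trans ih
  | pred i ih =>
    have h := trace_step x p hper (-(i:ℤ) - 1)
    rw [show -(i:ℤ) - 1 + 1 = -(i:ℤ) by ring] at h ⊢
    rw [show -(i:ℤ) - 1 + 2 = -(i:ℤ) + 1 by ring] at h
    exact h.trans ih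

lemma Y_negp (hp : 1 ≤ p) (j : ℤ) : Y x j (-(p:ℤ)) = -(Y x (j+1) ((p:ℤ)-2)) := by
  by_cases hq : p = 1
  · subst hq; norm_num [Y_neg_one]
  · obtain ⟨m, rfl⟩ : ∃ m : ℕ, p = m + 2 := ⟨p - 2, by omega⟩
    rw [show -(((m+2:ℕ)):ℤ) = -(m:ℤ) - 2 by push_cast; ring, Y_neg,
      show ((m+2:ℕ):ℤ) - 2 = (m:ℤ) by push_cast; ring, Y_coe]
    have h := pz_per x (m+2) hper m (j + 1 - ((m+2:ℕ):ℤ))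
    rw [show j + 1 - ((m+2:ℕ):ℤ) + ((m+2:ℕ):ℤ) = j + 1 by ring] at h
    rw [show j - (m:ℤ) - 1 = j + 1 - ((m+2:ℕ):ℤ) by push_cast; ring, h]

lemma Y_negp1 (hp : 1 ≤ p) (j : ℤ) : Y x j (-1 - (p:ℤ)) = -(Y x j ((p:ℤ) - 1)) := by
  obtain ⟨m, rfl⟩ : ∃ m : ℕ, p = m + 1 := ⟨p - 1, by omega⟩
  rw [show -1 - (((m+1:ℕ)):ℤ) = -(m:ℤ) - 2 by push_cast; ring, Y_neg,
    show ((m+1:ℕ):ℤ) - 1 = (m:ℤ) by push_cast; ring, Y_coe]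
  have h := pz_per x (m+1) hper m (j - ((m+1:ℕ):ℤ))
  rw [show j - ((m+1:ℕ):ℤ) + ((m+1:ℕ):ℤ) = j by ring] at h
  rw [show j - (m:ℤ) - 1 = j - ((m+1:ℕ):ℤ) by push_cast; ring, h]

lemma YD_up (d : R) (n j : ℤ)
    (h0 : d * Y x j n = Y x j (n + p) + Y x j (n - p))
    (h1 : d * Y x j (n + 1) = Y x j (n + 1 + p) + Y x j (n + 1 - p)) :
    d * Y x j (n + 2) = Y x j (n + 2 + p) + Y x j (n + 2 - p) := by
  have r := Y_rec x j n
  have r1 := Y_rec x j (n + p)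
  have r2 := Y_rec x j (n - p)
  rw [show j + (n + (p:ℤ)) + 1 = (j + n + 1) + p by ring, hper (j + n + 1)] at r1
  have hx := hper (j + n + 1 - p)
  rw [show j + n + 1 - (p:ℤ) + p = j + n + 1 by ring] at hx
  rw [show j + (n - (p:ℤ)) + 1 = j + n + 1 - p by ring, ← hx] at r2
  linear_combination (norm := ring_nf) d * r + x (j + n + 1) * h1 - h0 - r1 - r2

lemma YD_down (d : R) (n j : ℤ)
    (h1 : d * Y x j (n + 1) = Y x j (n + 1 + p) + Y x j (n + 1 - p))
    (h2 : d * Y x j (n + 2) = Y x j (n + 2 + p) + Y x j (n + 2 - p)) :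
    d * Y x j n = Y x j (n + p) + Y x j (n - p) := by
  have r := Y_rec x j n
  have r1 := Y_rec x j (n + p)
  have r2 := Y_rec x j (n - p)
  rw [show j + (n + (p:ℤ)) + 1 = (j + n + 1) + p by ring, hper (j + n + 1)] at r1
  have hx := hper (j + n + 1 - p)
  rw [show j + n + 1 - (p:ℤ) + p = j + n + 1 by ring] at hx
  rw [show j + (n - (p:ℤ)) + 1 = j + n + 1 - p by ring, ← hx] at r2
  linear_combination (norm := ring_nf) d * r + x (j + n + 1) * h1 - h2 - r1 - r2

lemma YD (hp : 1 ≤ p) (j n : ℤ) :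
    (Y x 0 (p:ℤ) - Y x 1 ((p:ℤ)-2)) * Y x j n = Y x j (n + p) + Y x j (n - p) := by
  set d : R := Y x 0 (p:ℤ) - Y x 1 ((p:ℤ)-2) with hd
  have P0 : d * Y x j 0 = Y x j (0 + p) + Y x j (0 - p) := by
    rw [Y_zero, mul_one, show (0:ℤ) + p = (p:ℤ) by ring,
      show (0:ℤ) - p = -(p:ℤ) by ring, Y_negp x p hper hp j, hd,
      ← trace_all x p hper j]
    ring
  have Pm1 : d * Y x j (-1) = Y x j (-1 + p) + Y x j (-1 - p) := by
    rw [Y_neg_one, mul_zero, Y_negp1 x p hper hp j,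
      show (-1:ℤ) + p = (p:ℤ) - 1 by ring]
    ring
  have upall : ∀ m : ℕ,
      (d * Y x j ((m:ℤ) - 1) = Y x j ((m:ℤ) - 1 + p) + Y x j ((m:ℤ) - 1 - p))
      ∧ (d * Y x j (m:ℤ) = Y x j ((m:ℤ) + p) + Y x j ((m:ℤ) - p)) := by
    intro m
    induction m with
    | zero =>
      refine ⟨by simpa using Pm1, by simpa using P0⟩
    | succ m ih =>
      constructor
      · have e : ((m+1:ℕ):ℤ) - 1 = (m:ℤ) := by push_cast; ring
        rw [e]; exact ih.2
      · have e : ((m+1:ℕ):ℤ) = ((m:ℤ) - 1) + 2 := by push_cast; ring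
        rw [e]
        exact YD_up x p hper d ((m:ℤ) - 1) j ih.1
          (by rw [show (m:ℤ) - 1 + 1 = (m:ℤ) by ring]; exact ih.2)
  have downall : ∀ m : ℕ,
      (d * Y x j (-(m:ℤ)) = Y x j (-(m:ℤ) + p) + Y x j (-(m:ℤ) - p))
      ∧ (d * Y x j (-(m:ℤ) - 1) = Y x j (-(m:ℤ) - 1 + p) + Y x j (-(m:ℤ) - 1 - p)) := by
    intro m
    induction m with
    | zero =>
      refine ⟨by simpa using P0, by simpa using Pm1⟩
    | succ m ih =>
      refine ⟨?_, ?_⟩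
      · have e : -((m+1:ℕ):ℤ) = -(m:ℤ) - 1 := by push_cast; ring
        rw [e]; exact ih.2
      · have e : -((m+1:ℕ):ℤ) - 1 = -(m:ℤ) - 2 := by push_cast; ring
        rw [e]
        exact YD_down x p hper d (-(m:ℤ) - 2) j
          (by rw [show -(m:ℤ) - 2 + 1 = -(m:ℤ) - 1 by ring]; exact ih.2)
          (by rw [show -(m:ℤ) - 2 + 2 = -(m:ℤ) by ring]; exact ih.1)
  rcases le_or_gt 0 n with h | h
  · obtain ⟨m, rfl⟩ := Int.eq_ofNat_of_zero_le h
    exact (upall m).2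
  · obtain ⟨m, rfl⟩ : ∃ m : ℕ, n = -(m:ℤ) - 1 := ⟨(-n-1).toNat, by omega⟩
    exact (downall m).2
lemma base1 (k : ℤ) (hk : 0 ≤ k) :
    Y x 0 k * (Y x 0 (p:ℤ) - Y x 1 ((p:ℤ)-2))
      = Y x 0 ((p:ℤ) + k) - Y x (k+1) ((p:ℤ) - k - 2) := by
  obtain ⟨a, rfl⟩ := Int.eq_ofNat_of_zero_le hk
  have hC := C_id x p 0 (a:ℤ)
  rw [Y_per x p hper (a:ℤ) 0, show (0:ℤ) + p + 1 = 1 + p by ring,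
    Y_per x p hper ((a:ℤ) - 1) 1] at hC
  have hK := K_id x a 0 ((p:ℤ) - 2)
  rw [show ((p:ℤ) - 2) + 1 = (p:ℤ) - 1 by ring] at hK
  linear_combination (norm := ring_nf) -hC - hK

lemma main (hp : 1 ≤ p) (k : ℤ) (hk : 0 ≤ k) : ∀ l : ℕ,
    Y x 0 k * Polynomial.aeval (Y x 0 (p:ℤ) - Y x 1 ((p:ℤ)-2)) (F l)
      = Y x 0 ((l:ℤ) * p + k) - Y x (k+1) ((l:ℤ) * p - k - 2) := by
  have haev0 : Polynomial.aeval (Y x 0 (p:ℤ) - Y x 1 ((p:ℤ)-2)) (F 0) = 2 := by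
    show Polynomial.aeval _ (2 : Polynomial ℤ) = 2
    rw [show (2 : Polynomial ℤ) = Polynomial.C 2 by norm_num, Polynomial.aeval_C]
    norm_num
  have haev1 : Polynomial.aeval (Y x 0 (p:ℤ) - Y x 1 ((p:ℤ)-2)) (F 1)
      = Y x 0 (p:ℤ) - Y x 1 ((p:ℤ)-2) := by
    simp [F]
  have haev2 : ∀ l : ℕ, Polynomial.aeval (Y x 0 (p:ℤ) - Y x 1 ((p:ℤ)-2)) (F (l+2))
      = (Y x 0 (p:ℤ) - Y x 1 ((p:ℤ)-2)) *
          Polynomial.aeval (Y x 0 (p:ℤ) - Y x 1 ((p:ℤ)-2)) (F (l+1))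
        - Polynomial.aeval (Y x 0 (p:ℤ) - Y x 1 ((p:ℤ)-2)) (F l) := by
    intro l
    rw [show F (l+2) = Polynomial.X * F (l+1) - F l from rfl]
    simp
  have H : ∀ l : ℕ,
      (Y x 0 k * Polynomial.aeval (Y x 0 (p:ℤ) - Y x 1 ((p:ℤ)-2)) (F l)
        = Y x 0 ((l:ℤ) * p + k) - Y x (k+1) ((l:ℤ) * p - k - 2))
      ∧ (Y x 0 k * Polynomial.aeval (Y x 0 (p:ℤ) - Y x 1 ((p:ℤ)-2)) (F (l+1))
        = Y x 0 (((l+1:ℕ):ℤ) * p + k) - Y x (k+1) (((l+1:ℕ):ℤ) * p - k - 2)) := by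
    intro l
    induction l with
    | zero =>
      constructor
      · rw [haev0]
        obtain ⟨a, rfl⟩ := Int.eq_ofNat_of_zero_le hk
        rw [show ((0:ℕ):ℤ) * p + (a:ℤ) = ((a:ℕ):ℤ) by push_cast; ring,
          show ((0:ℕ):ℤ) * p - (a:ℤ) - 2 = -((a:ℕ):ℤ) - 2 by push_cast; ring,
          Y_neg, Y_coe, show (a:ℤ) + 1 - (a:ℤ) - 1 = 0 by ring]
        ring
      · rw [haev1, show ((0+1:ℕ):ℤ) * p + k = (p:ℤ) + k by push_cast; ring,
          show ((0+1:ℕ):ℤ) * p - k - 2 = (p:ℤ) - k - 2 by push_cast; ring]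
        exact base1 x p hper k hk
    | succ l ih =>
      refine ⟨ih.2, ?_⟩
      rw [haev2]
      have h1 := ih.1
      have h2 := ih.2
      have yd1 := YD x p hper hp 0 (((l+1:ℕ):ℤ) * p + k)
      have yd2 := YD x p hper hp (k+1) (((l+1:ℕ):ℤ) * p - k - 2)
      push_cast at h1 h2 yd1 yd2 ⊢
      ring_nf at h1 h2 yd1 yd2 ⊢
      linear_combination (norm := ring_nf)
        (Y x 0 (p:ℤ) - Y x 1 ((p:ℤ)-2)) * h2 + yd1 - yd2 - h1
  exact fun l => (H l).1

end trace
end GDP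

/-- The general difference property: if the periodic generalized Chebyshev
values satisfy the tube multiplication identities, then with
`d = X_0^{(p)} − X_1^{(p−2)}` one has, for all `l ≥ 1` and `0 ≤ k ≤ p−1`,
`X_0^{(k)} · F_l(d) = X_0^{(lp+k)} − X_{k+1}^{(lp−k−2)}`. -/
theorem general_difference_property {R : Type*} [CommRing R]
    (p : ℕ) (hp : 1 ≤ p) (x : ℤ → R) (hper : ∀ i : ℤ, x (i + p) = x i)
    (hmul : ∀ m n j k : ℤ, 0 < m → 0 < n → 0 ≤ j → j ≤ (p : ℤ) - 1 →
      0 < j + k * p → j + k * p ≤ n → n - j - k * p ≤ m →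
      Xn x j m * Xn x 0 n =
        Xn x 0 (m + j + k * p) * Xn x j (n - j - k * p) +
          Xn x 0 (j + k * p - 1) * Xn x (n + 1) (m + j + k * p - n - 1)) :
    ∀ (l : ℕ) (k : ℤ), 1 ≤ l → 0 ≤ k → k ≤ (p : ℤ) - 1 →
      Xn x 0 k * Polynomial.aeval (Xn x 0 p - Xn x 1 ((p : ℤ) - 2)) (F l) =
        Xn x 0 (l * p + k) - Xn x (k + 1) (l * p - k - 2) := by

  intro l k hl hk hk1
  have hlp : (p:ℤ) ≤ (l:ℤ) * p := by
    have : ((1:ℕ):ℤ) ≤ (l:ℤ) := by exact_mod_cast hl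
    nlinarith [Int.ofNat_nonneg p]
  have h01 : (0:ℤ) ≤ (l:ℤ) * p + k := by positivity
  have h02 : (-1:ℤ) ≤ (l:ℤ) * p - k - 2 := by linarith
  have h := GDP.main x p hper hp k hk l
  rw [GDP.Y_eq_Xn x 0 (by linarith : (-1:ℤ) ≤ k),
    GDP.Y_eq_Xn x 0 (by omega : (-1:ℤ) ≤ ((p:ℕ):ℤ)),
    GDP.Y_eq_Xn x 1 (by omega : (-1:ℤ) ≤ (p:ℤ) - 2),
    GDP.Y_eq_Xn x 0 (by linarith : (-1:ℤ) ≤ (l:ℤ) * p + k),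
    GDP.Y_eq_Xn x (k+1) h02] at h
  exact h
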